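/- Let F be a field and n a positive integer such that the characteristic of F is zero or does not divide n. Let ζ and ζ' be two primitive n-th roots of unity in an algebraic closure of F. Then for every natural number a coprime to n: the minimal polynomial of ζ^a over F equals the minimal polynomial of ζ over F if and only if the minimal polynomial of ζ'^a over F equals the minimal polynomial of ζ' over F. (Hence the set of exponents {a mod n : minpoly_F(ζ^a) = minpoly_F(ζ)} is independent of the choice of primitive n-th root of unity ζ.) -/
import Mathlib

private lemma aux_dir (F : Type) [Field F] (n : ℕ) (hn : 0 < n)
    (ζ ζ' : AlgebraicClosure F)
    (hζ : IsPrimitiveRoot ζ n) (hζ' : IsPrimitiveRoot ζ' n)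
    (a : ℕ) (h : minpoly F (ζ ^ a) = minpoly F ζ) :
    minpoly F (ζ' ^ a) = minpoly F ζ' := by
  haveI : NeZero n := ⟨hn.ne'⟩
  obtain ⟨k, -, hk⟩ := hζ.eq_pow_of_pow_eq_one hζ'.pow_eq_one
  obtain ⟨σ, hσ⟩ := IsConjRoot.exists_algEquiv (K := F) (isConjRoot_def.mpr h)
  have : σ ζ' = ζ' ^ a := by
    rw [← hk, map_pow, hσ, ← pow_mul, ← pow_mul, mul_comm]
  calc minpoly F (ζ' ^ a) = minpoly F (σ ζ') := by rw [this]
    _ = minpoly F ζ' := minpoly.algEquiv_eq σ ζ'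

theorem stmt_1 (F : Type) [Field F] (n : ℕ) (hn : 0 < n)
    (hchar : ringChar F = 0 ∨ ¬ (ringChar F ∣ n))
    (ζ ζ' : AlgebraicClosure F)
    (hζ : IsPrimitiveRoot ζ n) (hζ' : IsPrimitiveRoot ζ' n)
    (a : ℕ) (ha : Nat.Coprime a n) :
    minpoly F (ζ ^ a) = minpoly F ζ ↔ minpoly F (ζ' ^ a) = minpoly F ζ' := by
  exact ⟨aux_dir F n hn ζ ζ' hζ hζ' a, aux_dir F n hn ζ' ζ hζ' hζ a⟩
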